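/- Let n ≥ 2 and λ₁, …, λₙ be positive real numbers such that ∑ᵢ 1/λᵢ ≤ C and ∏ᵢ λᵢ ≤ D. Then ∑ᵢ λᵢ ≤ C^{n-1}·D/(n-1)!. -/
import Mathlib


open Finset

/-- Two-term binomial lower bound: `b^c + c*a*b^(c-1) ≤ (a+b)^c` for nonneg `a b`, `c ≥ 1`. -/
lemma two_term_binomial (a b : ℝ) (ha : 0 ≤ a) (hb : 0 ≤ b) (c : ℕ) (hc : 1 ≤ c) :
    b ^ c + c * a * b ^ (c - 1) ≤ (a + b) ^ c := by
  rw [add_pow]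
  have hsub : ({0, 1} : Finset ℕ) ⊆ Finset.range (c + 1) := by
    intro k hk
    simp only [Finset.mem_insert, Finset.mem_singleton] at hk
    rcases hk with rfl | rfl <;> simp [Finset.mem_range] <;> omega
  have hle : ∑ k ∈ ({0, 1} : Finset ℕ), a ^ k * b ^ (c - k) * (c.choose k : ℝ)
      ≤ ∑ k ∈ Finset.range (c + 1), a ^ k * b ^ (c - k) * (c.choose k : ℝ) := by
    apply Finset.sum_le_sum_of_subset_of_nonneg hsub
    intro k _ _
    positivity
  refine le_trans ?_ hle
  rw [Finset.sum_pair (by norm_num)]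
  simp [Nat.choose_one_right]
  ring_nf
  rfl


lemma lemA {ι : Type*} [DecidableEq ι] (x : ι → ℝ) (hx : ∀ i, 0 ≤ x i) (s : Finset ι) :
    (s.card.factorial : ℝ) * ∏ i ∈ s, x i ≤ (∑ i ∈ s, x i) ^ s.card := by
  induction s using Finset.induction_on with
  | empty => simp
  | @insert a t ha ih =>
    rw [Finset.card_insert_of_notMem ha, Finset.prod_insert ha, Finset.sum_insert ha,
      Nat.factorial_succ]
    have hS : 0 ≤ ∑ i ∈ t, x i := Finset.sum_nonneg fun i _ => hx i
    have h1 : ((t.card + 1 : ℕ) : ℝ) * (t.card.factorial : ℝ) * (x a * ∏ i ∈ t, x i)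
        ≤ ((t.card + 1 : ℕ) : ℝ) * x a * ((∑ i ∈ t, x i) ^ t.card) := by
      have hnn : (0:ℝ) ≤ ((t.card + 1 : ℕ) : ℝ) * x a :=
        mul_nonneg (Nat.cast_nonneg _) (hx a)
      have := mul_le_mul_of_nonneg_left ih hnn
      calc ((t.card + 1 : ℕ) : ℝ) * (t.card.factorial : ℝ) * (x a * ∏ i ∈ t, x i)
          = (((t.card + 1 : ℕ) : ℝ) * x a) * ((t.card.factorial : ℝ) * ∏ i ∈ t, x i) := by ring
        _ ≤ (((t.card + 1 : ℕ) : ℝ) * x a) * ((∑ i ∈ t, x i) ^ t.card) := this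
        _ = ((t.card + 1 : ℕ) : ℝ) * x a * ((∑ i ∈ t, x i) ^ t.card) := by ring
    have h2 := two_term_binomial (x a) (∑ i ∈ t, x i) (hx a) hS (t.card + 1) (by omega)
    have h3 : ((t.card + 1 : ℕ) : ℝ) * x a * ((∑ i ∈ t, x i) ^ t.card)
        ≤ (x a + ∑ i ∈ t, x i) ^ (t.card + 1) := by
      refine le_trans ?_ h2
      have hpow : (∑ i ∈ t, x i) ^ (t.card + 1 - 1) = (∑ i ∈ t, x i) ^ t.card := by
        norm_num
      rw [hpow]
      have : 0 ≤ (∑ i ∈ t, x i) ^ (t.card + 1) := by positivity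
      push_cast
      linarith
    push_cast at h1 h3 ⊢
    linarith
    
/-- Key lemma: `(c-1)! * ∑_i ∏_{j ∈ s.erase i} x j ≤ (∑ x)^(c-1)` for nonneg `x`. -/
lemma lemB {ι : Type*} [DecidableEq ι] (x : ι → ℝ) (hx : ∀ i, 0 ≤ x i)
    (s : Finset ι) (hs : s.Nonempty) :
    ((s.card - 1).factorial : ℝ) * ∑ i ∈ s, ∏ j ∈ s.erase i, x j
      ≤ (∑ j ∈ s, x j) ^ (s.card - 1) := by
  induction hs using Finset.Nonempty.cons_induction with
  | singleton a => simp
  | cons a t ha ht ih =>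
    rw [Finset.cons_eq_insert]
    have hc1 : 1 ≤ t.card := Finset.card_pos.mpr ht
    have hat : a ∉ t := ha
    rw [Finset.card_insert_of_notMem hat]
    have hsum : ∑ i ∈ insert a t, ∏ j ∈ (insert a t).erase i, x j
        = (∏ j ∈ t, x j) + ∑ i ∈ t, (x a * ∏ j ∈ t.erase i, x j) := by
      rw [Finset.sum_insert hat, Finset.erase_insert hat]
      congr 1
      apply Finset.sum_congr rfl
      intro i hi
      have hia : i ≠ a := fun h => hat (h ▸ hi)
      rw [Finset.erase_insert_of_ne hia.symm,
        Finset.prod_insert (fun h => hat (Finset.mem_of_mem_erase h))]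
    rw [hsum, Finset.sum_insert hat]
    set c := t.card with hcdef
    have hc : c + 1 - 1 = c := by omega
    rw [hc]
    set S := ∑ j ∈ t, x j with hSdef
    have hS : 0 ≤ S := Finset.sum_nonneg fun i _ => hx i
    -- factorial: c! = c * (c-1)!
    have hfact : (c.factorial : ℝ) = (c : ℝ) * ((c - 1).factorial : ℝ) := by
      have h : c - 1 + 1 = c := by omega
      calc (c.factorial : ℝ) = ((c - 1 + 1).factorial : ℝ) := by rw [h]
        _ = ((c - 1 + 1 : ℕ) : ℝ) * ((c - 1).factorial : ℝ) := by
            rw [Nat.factorial_succ]; push_cast; ring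
        _ = (c : ℝ) * ((c - 1).factorial : ℝ) := by rw [h]
    have hA := lemA x hx t
    have hB : ((c - 1).factorial : ℝ) * ∑ i ∈ t, ∏ j ∈ t.erase i, x j ≤ S ^ (c - 1) := ih
    have h2 := two_term_binomial (x a) S (hx a) hS c hc1
    -- goal: c! * (∏ + ∑ xa * ∏erase) ≤ (xa + S)^c
    have key : (c.factorial : ℝ) * ((∏ j ∈ t, x j) + ∑ i ∈ t, (x a * ∏ j ∈ t.erase i, x j))
        ≤ S ^ c + (c : ℝ) * x a * S ^ (c - 1) := by
      have e1 : (c.factorial : ℝ) * (∏ j ∈ t, x j) ≤ S ^ c := hA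
      have e2 : (c.factorial : ℝ) * ∑ i ∈ t, (x a * ∏ j ∈ t.erase i, x j)
          ≤ (c : ℝ) * x a * S ^ (c - 1) := by
        rw [← Finset.mul_sum]
        calc (c.factorial : ℝ) * (x a * ∑ i ∈ t, ∏ j ∈ t.erase i, x j)
            = (c : ℝ) * x a * (((c - 1).factorial : ℝ) * ∑ i ∈ t, ∏ j ∈ t.erase i, x j) := by
              rw [hfact]; ring
          _ ≤ (c : ℝ) * x a * S ^ (c - 1) := by
              exact mul_le_mul_of_nonneg_left hB (mul_nonneg (Nat.cast_nonneg _) (hx a))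
      linarith [e1, e2]
    calc (c.factorial : ℝ) * ((∏ j ∈ t, x j) + ∑ i ∈ t, (x a * ∏ j ∈ t.erase i, x j))
        ≤ S ^ c + (c : ℝ) * x a * S ^ (c - 1) := key
      _ ≤ (x a + S) ^ c := h2

theorem sum_le_of_sum_inv_le_of_prod_le
    (n : ℕ) (hn : 2 ≤ n) (lam : Fin n → ℝ) (hpos : ∀ i, 0 < lam i)
    (C D : ℝ) (hC : ∑ i, 1 / lam i ≤ C) (hD : ∏ i, lam i ≤ D) :
    ∑ i, lam i ≤ C ^ (n - 1) * D / (Nat.factorial (n - 1) : ℝ) := by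
  set x : Fin n → ℝ := fun i => (lam i)⁻¹ with hxdef
  have hx : ∀ i, 0 ≤ x i := fun i => le_of_lt (inv_pos.mpr (hpos i))
  have hxC : ∑ i, x i ≤ C := by
    simpa [hxdef, one_div] using hC
  have hSnn : 0 ≤ ∑ i, x i := Finset.sum_nonneg fun i _ => hx i
  have hCpos : 0 < C := lt_of_lt_of_le (Finset.sum_pos (fun i _ => inv_pos.mpr (hpos i))
    ⟨⟨0, by omega⟩, Finset.mem_univ _⟩) hxC
  have hDpos : 0 < D := lt_of_lt_of_le (Finset.prod_pos fun i _ => hpos i) hD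
  have hcard : (Finset.univ : Finset (Fin n)).card = n := by simp
  have hne : (Finset.univ : Finset (Fin n)).Nonempty := ⟨⟨0, by omega⟩, Finset.mem_univ _⟩
  have hB := lemB x hx Finset.univ hne
  rw [hcard] at hB
  -- pointwise bound: lam i ≤ D * ∏_{j ∈ erase i} x j
  have hpt : ∀ i, lam i ≤ D * ∏ j ∈ Finset.univ.erase i, x j := by
    intro i
    have hprod : lam i * ∏ j ∈ Finset.univ.erase i, lam j = ∏ j, lam j :=
      Finset.mul_prod_erase Finset.univ lam (Finset.mem_univ i)
    have hPpos : 0 < ∏ j ∈ Finset.univ.erase i, lam j :=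
      Finset.prod_pos fun j _ => hpos j
    have hxprod : ∏ j ∈ Finset.univ.erase i, x j
        = (∏ j ∈ Finset.univ.erase i, lam j)⁻¹ := by
      simp [hxdef, Finset.prod_inv_distrib]
    rw [hxprod, ← div_eq_mul_inv, le_div_iff₀ hPpos, hprod]
    exact hD
  have hsum : ∑ i, lam i ≤ D * ∑ i, ∏ j ∈ Finset.univ.erase i, x j := by
    rw [Finset.mul_sum]
    exact Finset.sum_le_sum fun i _ => hpt i
  have hT : ∑ i, ∏ j ∈ Finset.univ.erase i, x j
      ≤ C ^ (n - 1) / ((n - 1).factorial : ℝ) := by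
    rw [le_div_iff₀ (Nat.cast_pos.mpr (Nat.factorial_pos _) : (0:ℝ) < ((n-1).factorial : ℝ))]
    have hpow : (∑ j, x j) ^ (n - 1) ≤ C ^ (n - 1) :=
      pow_le_pow_left₀ hSnn hxC _
    calc (∑ i, ∏ j ∈ Finset.univ.erase i, x j) * ((n - 1).factorial : ℝ)
        = ((n - 1).factorial : ℝ) * ∑ i, ∏ j ∈ Finset.univ.erase i, x j := by ring
      _ ≤ (∑ j, x j) ^ (n - 1) := hB
      _ ≤ C ^ (n - 1) := hpow
  calc ∑ i, lam i ≤ D * ∑ i, ∏ j ∈ Finset.univ.erase i, x j := hsum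
    _ ≤ D * (C ^ (n - 1) / ((n - 1).factorial : ℝ)) :=
        mul_le_mul_of_nonneg_left hT (le_of_lt hDpos)
    _ = C ^ (n - 1) * D / ((n - 1).factorial : ℝ) := by ring
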